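/- Let n ≥ 1, let Ω ⊆ ℝ^n be open, let k_{ij} : ℝ^n → ℝ be C¹, let h : Ω → ℝ, let k̂_{ij} ∈ ℝ be constants, and let ε > 0. Suppose: (a) T^ε : Ω → ℝ is C² and satisfies −∂_i( k_{ij}(x/ε) ∂_j T^ε )(x) = h(x) on Ω; (b) T⁽⁰⁾ : Ω → ℝ is C⁴ and satisfies −k̂_{ij} ∂_i∂_j T⁽⁰⁾(x) = h(x) on Ω; (c) for each α, M_α : ℝ^n → ℝ is C² with ∂_{y_i}( k_{ij}(y) ∂_{y_j}M_α ) = −∂_{y_i}k_{iα} for all y; (d) for each (α₁,α₂), M_{α₁α₂} : ℝ^n → ℝ is C² with ∂_{y_i}( k_{ij}(y) ∂_{y_j}M_{α₁α₂} ) = k̂_{α₁α₂} − k_{α₁α₂}(y) − ∂_{y_i}( k_{iα₂}(y) M_{α₁}(y) ) − k_{α₁ j}(y) ∂_{y_j}M_{α₂}(y) for all y. Define T⁽¹⁾(x,y) = M_α(y)∂_α T⁽⁰⁾(x), T⁽²⁾(x,y) = M_{α₁α₂}(y) ∂²_{α₁α₂}T⁽⁰⁾(x), the second-order two-scale approximation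 T^{(2ε)}(x) = T⁽⁰⁾(x) + ε T⁽¹⁾(x, x/ε) + ε² T⁽²⁾(x, x/ε), and the residual T_Δ^{(2ε)} = T^ε − T^{(2ε)}. Then for every x ∈ Ω, −∂_i( k_{ij}(x/ε) ∂_j T_Δ^{(2ε)} )(x) = ε G₀(x, x/ε) + ε² G₁(x, x/ε), where G₀(x,y) = ∂_{y_i}( k_{ij}(y) ∂_{x_j}T⁽²⁾(x,y) ) + ∂_{x_i}( k_{ij}(y) ∂_{y_j}T⁽²⁾(x,y) ) + ∂_{x_i}( k_{ij}(y) ∂_{x_j}T⁽¹⁾(x,y) ) and G₁(x,y) = ∂_{x_i}( k_{ij}(y) ∂_{x_j}T⁽²⁾(x,y) ), with ∂_{x_i} acting on x-arguments and ∂_{y_i} on y-arguments (Einstein summation throughout). -/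

import Mathlib

open scoped BigOperators

/-- Partial derivative of `f : ℝ^n → ℝ` in the `i`-th coordinate direction. -/
noncomputable def pd {n : ℕ} (i : Fin n) (f : (Fin n → ℝ) → ℝ) (y : Fin n → ℝ) : ℝ :=
  fderiv ℝ f y (Pi.single i 1)

/-- The separated first-order corrector `T¹(x,y) = M_α(y) ∂_α T⁰(x)`. -/
noncomputable def T1sep {n : ℕ} (M : Fin n → (Fin n → ℝ) → ℝ) (T0 : (Fin n → ℝ) → ℝ)
    (x y : Fin n → ℝ) : ℝ :=
  ∑ α, M α y * pd α T0 x

/-- The separated second-order corrector `T²(x,y) = M_{α₁α₂}(y) ∂²_{α₁α₂}T⁰(x)`. -/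
noncomputable def T2sep {n : ℕ} (M2 : Fin n → Fin n → (Fin n → ℝ) → ℝ)
    (T0 : (Fin n → ℝ) → ℝ) (x y : Fin n → ℝ) : ℝ :=
  ∑ α₁, ∑ α₂, M2 α₁ α₂ y * pd α₁ (pd α₂ T0) x

section Toolkit

variable {n : ℕ} {i j : Fin n} {f g : (Fin n → ℝ) → ℝ} {x : Fin n → ℝ} {c : ℝ}

lemma pd_congr (h : f =ᶠ[nhds x] g) : pd i f x = pd i g x := by
  unfold pd; rw [h.fderiv_eq]

lemma pd_add (hf : DifferentiableAt ℝ f x) (hg : DifferentiableAt ℝ g x) :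
    pd i (fun y => f y + g y) x = pd i f x + pd i g x := by
  unfold pd; rw [fderiv_fun_add hf hg]; rfl

lemma pd_sub (hf : DifferentiableAt ℝ f x) (hg : DifferentiableAt ℝ g x) :
    pd i (fun y => f y - g y) x = pd i f x - pd i g x := by
  unfold pd; rw [fderiv_fun_sub hf hg]; rfl

lemma pd_mul (hf : DifferentiableAt ℝ f x) (hg : DifferentiableAt ℝ g x) :
    pd i (fun y => f y * g y) x = pd i f x * g x + f x * pd i g x := by
  unfold pd; rw [fderiv_fun_mul hf hg]; simp [mul_comm]; ring

lemma pd_const_mul (hf : DifferentiableAt ℝ f x) :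
    pd i (fun y => c * f y) x = c * pd i f x := by
  unfold pd; rw [fderiv_const_mul hf]; rfl

lemma pd_const : pd i (fun _ => c) x = 0 := by
  unfold pd; rw [fderiv_fun_const]; rfl

lemma pd_sum {ι : Type*} (s : Finset ι) (F : ι → (Fin n → ℝ) → ℝ)
    (h : ∀ a ∈ s, DifferentiableAt ℝ (F a) x) :
    pd i (fun y => ∑ a ∈ s, F a y) x = ∑ a ∈ s, pd i (F a) x := by
  unfold pd; rw [fderiv_fun_sum h]; simp

lemma pd_smul_comp (hg : DifferentiableAt ℝ g (c • x)) :
    pd i (fun y => g (c • y)) x = c * pd i g (c • x) := by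
  have h1 : HasFDerivAt (fun y : Fin n → ℝ => c • y)
      (c • ContinuousLinearMap.id ℝ (Fin n → ℝ)) x := (hasFDerivAt_id x).const_smul c
  have h2 := hg.hasFDerivAt.comp x h1
  unfold pd
  have : (fun y => g (c • y)) = g ∘ (fun y : Fin n → ℝ => c • y) := rfl
  rw [this, h2.fderiv]
  simp [mul_comm]

lemma contDiffAt_pd {m : ℕ} (hf : ContDiffAt ℝ (m + 1) f x) :
    ContDiffAt ℝ m (fun y => pd i f y) x := by
  exact ContDiffAt.clm_apply (hf.fderiv_right (m := m) (by norm_cast))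
    (contDiffAt_const (c := Pi.single i 1))

lemma differentiableAt_pd (hf : ContDiffAt ℝ 2 f x) :
    DifferentiableAt ℝ (fun y => pd i f y) x := by
  have : ContDiffAt ℝ (1 + 1 : ℕ) f x := by exact_mod_cast hf
  exact (contDiffAt_pd (m := 1) this).differentiableAt (by norm_num)

lemma pd_symm (hf : ContDiffAt ℝ 2 f x) :
    pd i (pd j f) x = pd j (pd i f) x := by
  have hs := hf.isSymmSndFDerivAt (by norm_num)
  have key : ∀ (a b : Fin n),
      pd a (pd b f) x = fderiv ℝ (fderiv ℝ f) x (Pi.single a 1) (Pi.single b 1) := by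
    intro a b
    unfold pd
    have hdf : DifferentiableAt ℝ (fderiv ℝ f) x :=
      (hf.fderiv_right (m := 1) (by norm_cast)).differentiableAt (by norm_num)
    rw [fderiv_clm_apply hdf (differentiableAt_const _)]
    simp
  rw [key, key, hs]

lemma sum_comm3 {m : ℕ} (f : Fin m → Fin m → Fin m → ℝ) :
    ∑ i, ∑ j, ∑ a, f i j a = ∑ a, ∑ i, ∑ j, f i j a := by
  calc ∑ i, ∑ j, ∑ a, f i j a = ∑ i, ∑ a, ∑ j, f i j a :=
        Finset.sum_congr rfl fun i _ => Finset.sum_comm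
    _ = ∑ a, ∑ i, ∑ j, f i j a := Finset.sum_comm

lemma sum_comm4 {m : ℕ} (f : Fin m → Fin m → Fin m → Fin m → ℝ) :
    ∑ i, ∑ j, ∑ a, ∑ b, f i j a b = ∑ a, ∑ b, ∑ i, ∑ j, f i j a b := by
  calc ∑ i, ∑ j, ∑ a, ∑ b, f i j a b = ∑ a, ∑ i, ∑ j, ∑ b, f i j a b := sum_comm3 _
    _ = ∑ a, ∑ b, ∑ i, ∑ j, f i j a b := Finset.sum_congr rfl fun a _ => sum_comm3 _

end Toolkit

set_option maxHeartbeats 4000000 in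
/-- **SOTS residual equation.**  With
`T^{(2ε)}(x) = T⁰(x) + ε T¹(x,x/ε) + ε² T²(x,x/ε)` and residual
`T_Δ^{(2ε)} = T^ε − T^{(2ε)}`, one has, pointwise on `Ω`,
`−∂_i(k_{ij}(x/ε)∂_j T_Δ^{(2ε)}) = ε G₀(x,x/ε) + ε² G₁(x,x/ε)`; in particular the SOTS
residual is of order `O(ε)` in the pointwise sense. -/
theorem sots_residual_equation (n : ℕ) (hn : 1 ≤ n)
    (Ω : Set (Fin n → ℝ)) (hΩ : IsOpen Ω)
    (k : Fin n → Fin n → (Fin n → ℝ) → ℝ)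
    (hk : ∀ i j, ContDiff ℝ 1 (k i j))
    (h : (Fin n → ℝ) → ℝ)
    (khat : Fin n → Fin n → ℝ)
    (ε : ℝ) (hε : 0 < ε)
    (Te : (Fin n → ℝ) → ℝ) (hTe : ContDiffOn ℝ 2 Te Ω)
    -- (a) the heterogeneous equation on Ω:
    (hTeeq : ∀ x ∈ Ω,
      -∑ i, pd i (fun x' => ∑ j, k i j (ε⁻¹ • x') * pd j Te x') x = h x)
    (T0 : (Fin n → ℝ) → ℝ) (hT0 : ContDiffOn ℝ 4 T0 Ω)
    -- (b) the homogenized equation with constant coefficients k̂ on Ω: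
    (hT0eq : ∀ x ∈ Ω, -∑ i, ∑ j, khat i j * pd i (pd j T0) x = h x)
    (M : Fin n → (Fin n → ℝ) → ℝ)
    (hM : ∀ α, ContDiff ℝ 2 (M α))
    -- (c) the first-order cell equations:
    (hcell : ∀ (α : Fin n) (y : Fin n → ℝ),
      ∑ i, pd i (fun y' => ∑ j, k i j y' * pd j (M α) y') y
        = -∑ i, pd i (k i α) y)
    (M2 : Fin n → Fin n → (Fin n → ℝ) → ℝ)
    (hM2 : ∀ α₁ α₂, ContDiff ℝ 2 (M2 α₁ α₂))
    -- (d) the second-order cell equations: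
    (hcell2 : ∀ (α₁ α₂ : Fin n) (y : Fin n → ℝ),
      ∑ i, pd i (fun y' => ∑ j, k i j y' * pd j (M2 α₁ α₂) y') y
        = khat α₁ α₂ - k α₁ α₂ y
          - ∑ i, pd i (fun y' => k i α₂ y' * M α₁ y') y
          - ∑ j, k α₁ j y * pd j (M α₂) y) :
    ∀ x ∈ Ω,
      -∑ i, pd i (fun x' => ∑ j, k i j (ε⁻¹ • x') *
          pd j (fun x'' => Te x''
            - (T0 x'' + ε * T1sep M T0 x'' (ε⁻¹ • x'')
                + ε ^ 2 * T2sep M2 T0 x'' (ε⁻¹ • x''))) x') x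
      =
      -- ε G₀(x, x/ε)
      ε * ((∑ i, pd i (fun y' => ∑ j, k i j y' *
              pd j (fun x' => T2sep M2 T0 x' y') x) (ε⁻¹ • x))
          + (∑ i, pd i (fun x' => ∑ j, k i j (ε⁻¹ • x) *
              pd j (fun y' => T2sep M2 T0 x' y') (ε⁻¹ • x)) x)
          + (∑ i, pd i (fun x' => ∑ j, k i j (ε⁻¹ • x) *
              pd j (fun x'' => T1sep M T0 x'' (ε⁻¹ • x)) x') x))
      +
      -- ε² G₁(x, x/ε)
      ε ^ 2 * (∑ i, pd i (fun x' => ∑ j, k i j (ε⁻¹ • x) *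
              pd j (fun x'' => T2sep M2 T0 x'' (ε⁻¹ • x)) x') x) := by
  intro x hx
  have hεne : ε ≠ 0 := ne_of_gt hε
  -- differentiability facts
  have fk : ∀ (i j : Fin n) (z : Fin n → ℝ), DifferentiableAt ℝ (k i j) z :=
    fun i j z => ((hk i j).differentiable (by norm_num)).differentiableAt
  have fM : ∀ (a : Fin n) (z : Fin n → ℝ), DifferentiableAt ℝ (M a) z :=
    fun a z => ((hM a).differentiable (by norm_num)).differentiableAt
  have fM2 : ∀ (a b : Fin n) (z : Fin n → ℝ), DifferentiableAt ℝ (M2 a b) z :=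
    fun a b z => ((hM2 a b).differentiable (by norm_num)).differentiableAt
  have fM' : ∀ (a b : Fin n) (z : Fin n → ℝ), DifferentiableAt ℝ (fun w => pd b (M a) w) z :=
    fun a b z => differentiableAt_pd ((hM a).contDiffAt)
  have fM2' : ∀ (a b c : Fin n) (z : Fin n → ℝ),
      DifferentiableAt ℝ (fun w => pd c (M2 a b) w) z :=
    fun a b c z => differentiableAt_pd ((hM2 a b).contDiffAt)
  have hT0at : ∀ z ∈ Ω, ContDiffAt ℝ 4 T0 z := fun z hz => hT0.contDiffAt (hΩ.mem_nhds hz)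
  have c3 : ∀ (a : Fin n), ∀ z ∈ Ω, ContDiffAt ℝ 3 (fun w => pd a T0 w) z := by
    intro a z hz
    have h4 : ContDiffAt ℝ ((3 : ℕ) + 1) T0 z := by exact_mod_cast hT0at z hz
    exact_mod_cast contDiffAt_pd (m := 3) h4
  have c2 : ∀ (a b : Fin n), ∀ z ∈ Ω, ContDiffAt ℝ 2 (fun w => pd a (pd b T0) w) z := by
    intro a b z hz
    have h3 : ContDiffAt ℝ ((2 : ℕ) + 1) (fun w => pd b T0 w) z := by exact_mod_cast c3 b z hz
    exact_mod_cast contDiffAt_pd (m := 2) h3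
  have c1 : ∀ (a b c : Fin n), ∀ z ∈ Ω,
      ContDiffAt ℝ 1 (fun w => pd a (pd b (pd c T0)) w) z := by
    intro a b c z hz
    have h2 : ContDiffAt ℝ ((1 : ℕ) + 1) (fun w => pd b (pd c T0) w) z := by
      exact_mod_cast c2 b c z hz
    exact_mod_cast contDiffAt_pd (m := 1) h2
  have fT0 : ∀ z ∈ Ω, DifferentiableAt ℝ T0 z :=
    fun z hz => (hT0at z hz).differentiableAt (by norm_num)
  have f1 : ∀ (a : Fin n), ∀ z ∈ Ω, DifferentiableAt ℝ (fun w => pd a T0 w) z :=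
    fun a z hz => (c3 a z hz).differentiableAt (by norm_num)
  have f2 : ∀ (a b : Fin n), ∀ z ∈ Ω, DifferentiableAt ℝ (fun w => pd a (pd b T0) w) z :=
    fun a b z hz => (c2 a b z hz).differentiableAt (by norm_num)
  have f3 : ∀ (a b c : Fin n), ∀ z ∈ Ω,
      DifferentiableAt ℝ (fun w => pd a (pd b (pd c T0)) w) z :=
    fun a b c z hz => (c1 a b c z hz).differentiableAt (by norm_num)
  have fTe : ∀ z ∈ Ω, DifferentiableAt ℝ Te z :=
    fun z hz => (hTe.contDiffAt (hΩ.mem_nhds hz)).differentiableAt (by norm_num)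
  have fTe' : ∀ (a : Fin n), ∀ z ∈ Ω, DifferentiableAt ℝ (fun w => pd a Te w) z :=
    fun a z hz => differentiableAt_pd (hTe.contDiffAt (hΩ.mem_nhds hz))
  have schwarz : ∀ a b : Fin n, pd a (pd b T0) x = pd b (pd a T0) x :=
    fun a b => pd_symm ((hT0at x hx).of_le (by norm_num))
  have inner1 : ∀ (j : Fin n), ∀ x' ∈ Ω,
      pd j (fun x'' => Te x'' - (T0 x'' + ε * T1sep M T0 x'' (ε⁻¹ • x'')
          + ε ^ 2 * T2sep M2 T0 x'' (ε⁻¹ • x''))) x'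
      = pd j Te x' - (pd j T0 x' + (∑ a, pd j (M a) (ε⁻¹ • x') * pd a T0 x')
          + ε * ((∑ a, M a (ε⁻¹ • x') * pd j (pd a T0) x')
              + ∑ a, ∑ b, pd j (M2 a b) (ε⁻¹ • x') * pd a (pd b T0) x')
          + ε ^ 2 * (∑ a, ∑ b, M2 a b (ε⁻¹ • x') * pd j (pd a (pd b T0)) x')) := by
    intro j x' hx'
    have d1 := fun a => f1 a x' hx'
    have d2 := fun a b => f2 a b x' hx'
    have d3 := fun a b c => f3 a b c x' hx'
    have dTe := fTe x' hx'
    have dT0 := fT0 x' hx'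
    unfold T1sep T2sep
    simp (disch := intros; first | assumption | fun_prop) only
      [pd_sub, pd_add, pd_const_mul, pd_sum, pd_mul, pd_smul_comp]
    simp only [Finset.sum_add_distrib, mul_assoc, ← Finset.mul_sum]
    field_simp
    ring
  -- abbreviation for the expanded gradient of the two-scale ansatz
  let EFf : Fin n → (Fin n → ℝ) → ℝ := fun j x' =>
    pd j T0 x' + (∑ a, pd j (M a) (ε⁻¹ • x') * pd a T0 x')
          + ε * ((∑ a, M a (ε⁻¹ • x') * pd j (pd a T0) x')
              + ∑ a, ∑ b, pd j (M2 a b) (ε⁻¹ • x') * pd a (pd b T0) x')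
          + ε ^ 2 * (∑ a, ∑ b, M2 a b (ε⁻¹ • x') * pd j (pd a (pd b T0)) x')
  have hsplit : ∀ i : Fin n,
      pd i (fun x' => ∑ j, k i j (ε⁻¹ • x') *
          pd j (fun x'' => Te x'' - (T0 x'' + ε * T1sep M T0 x'' (ε⁻¹ • x'')
              + ε ^ 2 * T2sep M2 T0 x'' (ε⁻¹ • x''))) x') x
      = pd i (fun x' => ∑ j, k i j (ε⁻¹ • x') * pd j Te x') x
        - pd i (fun x' => ∑ j, k i j (ε⁻¹ • x') * EFf j x') x := by
    intro i
    have heq : (fun x' => ∑ j, k i j (ε⁻¹ • x') *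
          pd j (fun x'' => Te x'' - (T0 x'' + ε * T1sep M T0 x'' (ε⁻¹ • x'')
              + ε ^ 2 * T2sep M2 T0 x'' (ε⁻¹ • x''))) x')
        =ᶠ[nhds x] (fun x' => (∑ j, k i j (ε⁻¹ • x') * pd j Te x')
            - ∑ j, k i j (ε⁻¹ • x') * EFf j x') := by
      filter_upwards [hΩ.mem_nhds hx] with x' hx'
      rw [← Finset.sum_sub_distrib]
      refine Finset.sum_congr rfl fun j _ => ?_
      rw [inner1 j x' hx']
      show _ = k i j (ε⁻¹ • x') * pd j Te x' - k i j (ε⁻¹ • x') *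
        (pd j T0 x' + (∑ a, pd j (M a) (ε⁻¹ • x') * pd a T0 x')
          + ε * ((∑ a, M a (ε⁻¹ • x') * pd j (pd a T0) x')
              + ∑ a, ∑ b, pd j (M2 a b) (ε⁻¹ • x') * pd a (pd b T0) x')
          + ε ^ 2 * (∑ a, ∑ b, M2 a b (ε⁻¹ • x') * pd j (pd a (pd b T0)) x'))
      ring
    rw [pd_congr heq]
    have d1 := fun a => f1 a x hx
    have d2 := fun a b => f2 a b x hx
    have d3 := fun a b c => f3 a b c x hx
    have dTe' := fun a => fTe' a x hx
    exact pd_sub (by fun_prop) (by fun_prop)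
  have LHSred : -∑ i, pd i (fun x' => ∑ j, k i j (ε⁻¹ • x') *
          pd j (fun x'' => Te x'' - (T0 x'' + ε * T1sep M T0 x'' (ε⁻¹ • x'')
              + ε ^ 2 * T2sep M2 T0 x'' (ε⁻¹ • x''))) x') x
      = h x + ∑ i, pd i (fun x' => ∑ j, k i j (ε⁻¹ • x') * EFf j x') x := by
    simp only [hsplit]
    rw [Finset.sum_sub_distrib]
    have hA := hTeeq x hx
    linarith
  have Sexp : ∀ i : Fin n, pd i (fun x' => ∑ j, k i j (ε⁻¹ • x') * EFf j x') x
      = ∑ j, (ε⁻¹ * (pd i (k i j) (ε⁻¹ • x) * pd j T0 x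
            + pd i (k i j) (ε⁻¹ • x) * ∑ a, pd j (M a) (ε⁻¹ • x) * pd a T0 x
            + k i j (ε⁻¹ • x) * ∑ a, pd i (pd j (M a)) (ε⁻¹ • x) * pd a T0 x)
        + (k i j (ε⁻¹ • x) * pd i (pd j T0) x
            + pd i (k i j) (ε⁻¹ • x) * ∑ a, M a (ε⁻¹ • x) * pd j (pd a T0) x
            + pd i (k i j) (ε⁻¹ • x) * ∑ a, ∑ b, pd j (M2 a b) (ε⁻¹ • x) * pd a (pd b T0) x
            + k i j (ε⁻¹ • x) * ∑ a, pd j (M a) (ε⁻¹ • x) * pd i (pd a T0) x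
            + k i j (ε⁻¹ • x) * ∑ a, pd i (M a) (ε⁻¹ • x) * pd j (pd a T0) x
            + k i j (ε⁻¹ • x) * ∑ a, ∑ b, pd i (pd j (M2 a b)) (ε⁻¹ • x) * pd a (pd b T0) x)
        + ε * (pd i (k i j) (ε⁻¹ • x) * ∑ a, ∑ b, M2 a b (ε⁻¹ • x) * pd j (pd a (pd b T0)) x
            + k i j (ε⁻¹ • x) * ∑ a, M a (ε⁻¹ • x) * pd i (pd j (pd a T0)) x
            + k i j (ε⁻¹ • x) * ∑ a, ∑ b, pd j (M2 a b) (ε⁻¹ • x) * pd i (pd a (pd b T0)) x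
            + k i j (ε⁻¹ • x) * ∑ a, ∑ b, pd i (M2 a b) (ε⁻¹ • x) * pd j (pd a (pd b T0)) x)
        + ε ^ 2 * (k i j (ε⁻¹ • x) *
            ∑ a, ∑ b, M2 a b (ε⁻¹ • x) * pd i (pd j (pd a (pd b T0))) x)) := by
    intro i
    have d1 := fun a => f1 a x hx
    have d2 := fun a b => f2 a b x hx
    have d3 := fun a b c => f3 a b c x hx
    show pd i (fun x' => ∑ j, k i j (ε⁻¹ • x') *
        (pd j T0 x' + (∑ a, pd j (M a) (ε⁻¹ • x') * pd a T0 x')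
          + ε * ((∑ a, M a (ε⁻¹ • x') * pd j (pd a T0) x')
              + ∑ a, ∑ b, pd j (M2 a b) (ε⁻¹ • x') * pd a (pd b T0) x')
          + ε ^ 2 * (∑ a, ∑ b, M2 a b (ε⁻¹ • x') * pd j (pd a (pd b T0)) x'))) x = _
    simp (disch := intros; first | assumption | fun_prop) only
      [pd_sum, pd_mul, pd_add, pd_const_mul, pd_smul_comp, pd_const,
       zero_mul, mul_zero, zero_add, add_zero]
    refine Finset.sum_congr rfl fun j _ => ?_
    simp only [Finset.sum_add_distrib, mul_assoc, ← Finset.mul_sum]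
    field_simp
    ring
  have hR1 : (∑ i, pd i (fun y' => ∑ j, k i j y' *
          pd j (fun x' => T2sep M2 T0 x' y') x) (ε⁻¹ • x))
      = ∑ i, ∑ j, (pd i (k i j) (ε⁻¹ • x) *
            ∑ a, ∑ b, M2 a b (ε⁻¹ • x) * pd j (pd a (pd b T0)) x
          + k i j (ε⁻¹ • x) * ∑ a, ∑ b, pd i (M2 a b) (ε⁻¹ • x) * pd j (pd a (pd b T0)) x) := by
    have d2 := fun a b => f2 a b x hx
    refine Finset.sum_congr rfl fun i _ => ?_
    have hfun : (fun y' => ∑ j, k i j y' * pd j (fun x' => T2sep M2 T0 x' y') x)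
        = (fun y' => ∑ j, k i j y' * ∑ a, ∑ b, M2 a b y' * pd j (pd a (pd b T0)) x) := by
      funext y'
      refine Finset.sum_congr rfl fun j _ => ?_
      congr 1
      show pd j (fun x' => ∑ a, ∑ b, M2 a b y' * pd a (pd b T0) x') x = _
      simp (disch := intros; first | assumption | fun_prop) only
        [pd_sum, pd_const_mul]
    rw [hfun]
    simp (disch := intros; first | assumption | fun_prop) only
      [pd_sum, pd_mul, pd_const, mul_zero, add_zero]
  have hR2 : (∑ i, pd i (fun x' => ∑ j, k i j (ε⁻¹ • x) *
          pd j (fun y' => T2sep M2 T0 x' y') (ε⁻¹ • x)) x)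
      = ∑ i, ∑ j, k i j (ε⁻¹ • x) *
          ∑ a, ∑ b, pd j (M2 a b) (ε⁻¹ • x) * pd i (pd a (pd b T0)) x := by
    have d2 := fun a b => f2 a b x hx
    refine Finset.sum_congr rfl fun i _ => ?_
    have hfun : (fun x' => ∑ j, k i j (ε⁻¹ • x) * pd j (fun y' => T2sep M2 T0 x' y') (ε⁻¹ • x))
        = (fun x' => ∑ j, k i j (ε⁻¹ • x) *
            ∑ a, ∑ b, pd j (M2 a b) (ε⁻¹ • x) * pd a (pd b T0) x') := by
      funext x'
      refine Finset.sum_congr rfl fun j _ => ?_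
      congr 1
      show pd j (fun y' => ∑ a, ∑ b, M2 a b y' * pd a (pd b T0) x') (ε⁻¹ • x) = _
      simp (disch := intros; first | assumption | fun_prop) only
        [pd_sum, pd_mul, pd_const, mul_zero, add_zero]
    rw [hfun]
    simp (disch := intros; first | assumption | fun_prop) only
      [pd_sum, pd_const_mul, pd_mul, pd_const, zero_mul, mul_zero, zero_add, add_zero]
  have hR3 : (∑ i, pd i (fun x' => ∑ j, k i j (ε⁻¹ • x) *
          pd j (fun x'' => T1sep M T0 x'' (ε⁻¹ • x)) x') x)
      = ∑ i, ∑ j, k i j (ε⁻¹ • x) * ∑ a, M a (ε⁻¹ • x) * pd i (pd j (pd a T0)) x := by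
    have d2 := fun a b => f2 a b x hx
    refine Finset.sum_congr rfl fun i _ => ?_
    have heq : (fun x' => ∑ j, k i j (ε⁻¹ • x) * pd j (fun x'' => T1sep M T0 x'' (ε⁻¹ • x)) x')
        =ᶠ[nhds x] (fun x' => ∑ j, k i j (ε⁻¹ • x) *
            ∑ a, M a (ε⁻¹ • x) * pd j (pd a T0) x') := by
      filter_upwards [hΩ.mem_nhds hx] with x' hx'
      have d1 := fun a => f1 a x' hx'
      refine Finset.sum_congr rfl fun j _ => ?_
      congr 1
      show pd j (fun x'' => ∑ a, M a (ε⁻¹ • x) * pd a T0 x'') x' = _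
      simp (disch := intros; first | assumption | fun_prop) only
        [pd_sum, pd_const_mul]
    rw [pd_congr heq]
    simp (disch := intros; first | assumption | fun_prop) only
      [pd_sum, pd_const_mul, pd_mul, pd_const, zero_mul, mul_zero, zero_add, add_zero]
  have hR4 : (∑ i, pd i (fun x' => ∑ j, k i j (ε⁻¹ • x) *
          pd j (fun x'' => T2sep M2 T0 x'' (ε⁻¹ • x)) x') x)
      = ∑ i, ∑ j, k i j (ε⁻¹ • x) *
          ∑ a, ∑ b, M2 a b (ε⁻¹ • x) * pd i (pd j (pd a (pd b T0))) x := by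
    have d3 := fun a b c => f3 a b c x hx
    refine Finset.sum_congr rfl fun i _ => ?_
    have heq : (fun x' => ∑ j, k i j (ε⁻¹ • x) * pd j (fun x'' => T2sep M2 T0 x'' (ε⁻¹ • x)) x')
        =ᶠ[nhds x] (fun x' => ∑ j, k i j (ε⁻¹ • x) *
            ∑ a, ∑ b, M2 a b (ε⁻¹ • x) * pd j (pd a (pd b T0)) x') := by
      filter_upwards [hΩ.mem_nhds hx] with x' hx'
      have d2 := fun a b => f2 a b x' hx'
      refine Finset.sum_congr rfl fun j _ => ?_
      congr 1
      show pd j (fun x'' => ∑ a, ∑ b, M2 a b (ε⁻¹ • x) * pd a (pd b T0) x'') x' = _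
      simp (disch := intros; first | assumption | fun_prop) only
        [pd_sum, pd_const_mul]
    rw [pd_congr heq]
    simp (disch := intros; first | assumption | fun_prop) only
      [pd_sum, pd_const_mul, pd_mul, pd_const, zero_mul, mul_zero, zero_add, add_zero]
  have hcellE : ∀ α : Fin n, ∑ i, ∑ j, (pd i (k i j) (ε⁻¹ • x) * pd j (M α) (ε⁻¹ • x)
        + k i j (ε⁻¹ • x) * pd i (pd j (M α)) (ε⁻¹ • x))
      = -∑ i, pd i (k i α) (ε⁻¹ • x) := by
    intro α
    rw [← hcell α (ε⁻¹ • x)]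
    refine Finset.sum_congr rfl fun i _ => ?_
    symm
    simp (disch := intros; first | assumption | fun_prop) only [pd_sum, pd_mul]
  have hcell2E : ∀ a b : Fin n,
      ∑ i, ∑ j, (pd i (k i j) (ε⁻¹ • x) * pd j (M2 a b) (ε⁻¹ • x)
          + k i j (ε⁻¹ • x) * pd i (pd j (M2 a b)) (ε⁻¹ • x))
      = khat a b - k a b (ε⁻¹ • x)
        - ∑ i, (pd i (k i b) (ε⁻¹ • x) * M a (ε⁻¹ • x)
            + k i b (ε⁻¹ • x) * pd i (M a) (ε⁻¹ • x))
        - ∑ j, k a j (ε⁻¹ • x) * pd j (M b) (ε⁻¹ • x) := by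
    intro a b
    have h2 := hcell2 a b (ε⁻¹ • x)
    have e1 : ∑ i, pd i (fun y' => ∑ j, k i j y' * pd j (M2 a b) y') (ε⁻¹ • x)
        = ∑ i, ∑ j, (pd i (k i j) (ε⁻¹ • x) * pd j (M2 a b) (ε⁻¹ • x)
            + k i j (ε⁻¹ • x) * pd i (pd j (M2 a b)) (ε⁻¹ • x)) := by
      refine Finset.sum_congr rfl fun i _ => ?_
      simp (disch := intros; first | assumption | fun_prop) only [pd_sum, pd_mul]
    have e2 : ∀ i : Fin n, pd i (fun y' => k i b y' * M a y') (ε⁻¹ • x)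
        = pd i (k i b) (ε⁻¹ • x) * M a (ε⁻¹ • x)
          + k i b (ε⁻¹ • x) * pd i (M a) (ε⁻¹ • x) := fun i => by
      simp (disch := intros; first | assumption | fun_prop) only [pd_mul]
    rw [e1] at h2
    rw [h2]
    simp only [e2]
  have hkhat : ∀ a b : Fin n, khat a b
      = k a b (ε⁻¹ • x)
        + (∑ i, (pd i (k i b) (ε⁻¹ • x) * M a (ε⁻¹ • x)
            + k i b (ε⁻¹ • x) * pd i (M a) (ε⁻¹ • x)))
        + (∑ j, k a j (ε⁻¹ • x) * pd j (M b) (ε⁻¹ • x))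
        + ∑ i, ∑ j, (pd i (k i j) (ε⁻¹ • x) * pd j (M2 a b) (ε⁻¹ • x)
            + k i j (ε⁻¹ • x) * pd i (pd j (M2 a b)) (ε⁻¹ • x)) := by
    intro a b
    have := hcell2E a b
    linarith
  have hT0E : ∑ a, ∑ b, khat a b * pd a (pd b T0) x = -h x := by
    have := hT0eq x hx
    linarith
  -- the ε⁻¹–order terms vanish by the first-order cell equations
  have hP0 : ∑ i, ∑ j, (pd i (k i j) (ε⁻¹ • x) * pd j T0 x
      + pd i (k i j) (ε⁻¹ • x) * ∑ a, pd j (M a) (ε⁻¹ • x) * pd a T0 x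
      + k i j (ε⁻¹ • x) * ∑ a, pd i (pd j (M a)) (ε⁻¹ • x) * pd a T0 x) = 0 := by
    have step1 : ∑ i, ∑ j, (pd i (k i j) (ε⁻¹ • x) * pd j T0 x
        + pd i (k i j) (ε⁻¹ • x) * ∑ a, pd j (M a) (ε⁻¹ • x) * pd a T0 x
        + k i j (ε⁻¹ • x) * ∑ a, pd i (pd j (M a)) (ε⁻¹ • x) * pd a T0 x)
        = (∑ i, ∑ j, pd i (k i j) (ε⁻¹ • x) * pd j T0 x)
          + ∑ i, ∑ j, ∑ a, (pd i (k i j) (ε⁻¹ • x) * pd j (M a) (ε⁻¹ • x)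
              + k i j (ε⁻¹ • x) * pd i (pd j (M a)) (ε⁻¹ • x)) * pd a T0 x := by
      rw [← Finset.sum_add_distrib]
      refine Finset.sum_congr rfl fun i _ => ?_
      rw [← Finset.sum_add_distrib]
      refine Finset.sum_congr rfl fun j _ => ?_
      rw [Finset.mul_sum, Finset.mul_sum, add_assoc, ← Finset.sum_add_distrib]
      congr 1
      exact Finset.sum_congr rfl fun a _ => by ring
    rw [step1, sum_comm3]
    have step2 : ∀ a : Fin n, ∑ i, ∑ j, (pd i (k i j) (ε⁻¹ • x) * pd j (M a) (ε⁻¹ • x)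
        + k i j (ε⁻¹ • x) * pd i (pd j (M a)) (ε⁻¹ • x)) * pd a T0 x
        = (-∑ i, pd i (k i a) (ε⁻¹ • x)) * pd a T0 x := by
      intro a
      rw [← hcellE a]
      simp only [Finset.sum_mul]
    simp only [step2]
    have step3 : ∑ i, ∑ j, pd i (k i j) (ε⁻¹ • x) * pd j T0 x
        = ∑ a, (∑ i, pd i (k i a) (ε⁻¹ • x)) * pd a T0 x := by
      rw [Finset.sum_comm]
      exact Finset.sum_congr rfl fun j _ => (Finset.sum_mul _ _ _).symm
    rw [step3, ← Finset.sum_add_distrib]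
    exact Finset.sum_eq_zero fun a _ => by ring
  -- canonicalizing the six ε⁰–order groups
  have hL2 : ∑ i, ∑ j, pd i (k i j) (ε⁻¹ • x) * ∑ a, M a (ε⁻¹ • x) * pd j (pd a T0) x
      = ∑ a, ∑ b, (∑ i, pd i (k i b) (ε⁻¹ • x) * M a (ε⁻¹ • x)) * pd a (pd b T0) x := by
    simp only [Finset.mul_sum]
    rw [sum_comm3]
    refine Finset.sum_congr rfl fun a _ => ?_
    rw [Finset.sum_comm]
    refine Finset.sum_congr rfl fun j _ => ?_
    rw [schwarz j a, Finset.sum_mul]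
    exact Finset.sum_congr rfl fun i _ => by ring
  have hL3 : ∑ i, ∑ j, pd i (k i j) (ε⁻¹ • x) *
        ∑ a, ∑ b, pd j (M2 a b) (ε⁻¹ • x) * pd a (pd b T0) x
      = ∑ a, ∑ b, (∑ i, ∑ j, pd i (k i j) (ε⁻¹ • x) * pd j (M2 a b) (ε⁻¹ • x))
          * pd a (pd b T0) x := by
    simp only [Finset.mul_sum]
    rw [sum_comm4]
    refine Finset.sum_congr rfl fun a _ => Finset.sum_congr rfl fun b _ => ?_
    rw [Finset.sum_mul]
    refine Finset.sum_congr rfl fun i _ => ?_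
    rw [Finset.sum_mul]
    exact Finset.sum_congr rfl fun j _ => by ring
  have hL4 : ∑ i, ∑ j, k i j (ε⁻¹ • x) * ∑ a, pd j (M a) (ε⁻¹ • x) * pd i (pd a T0) x
      = ∑ a, ∑ b, (∑ j, k a j (ε⁻¹ • x) * pd j (M b) (ε⁻¹ • x)) * pd a (pd b T0) x := by
    simp only [Finset.mul_sum]
    refine Finset.sum_congr rfl fun i _ => ?_
    rw [Finset.sum_comm]
    refine Finset.sum_congr rfl fun a _ => ?_
    rw [Finset.sum_mul]
    exact Finset.sum_congr rfl fun j _ => by ring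
  have hL5 : ∑ i, ∑ j, k i j (ε⁻¹ • x) * ∑ a, pd i (M a) (ε⁻¹ • x) * pd j (pd a T0) x
      = ∑ a, ∑ b, (∑ i, k i b (ε⁻¹ • x) * pd i (M a) (ε⁻¹ • x)) * pd a (pd b T0) x := by
    simp only [Finset.mul_sum]
    rw [sum_comm3]
    refine Finset.sum_congr rfl fun a _ => ?_
    rw [Finset.sum_comm]
    refine Finset.sum_congr rfl fun j _ => ?_
    rw [schwarz j a, Finset.sum_mul]
    exact Finset.sum_congr rfl fun i _ => by ring
  have hL6 : ∑ i, ∑ j, k i j (ε⁻¹ • x) *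
        ∑ a, ∑ b, pd i (pd j (M2 a b)) (ε⁻¹ • x) * pd a (pd b T0) x
      = ∑ a, ∑ b, (∑ i, ∑ j, k i j (ε⁻¹ • x) * pd i (pd j (M2 a b)) (ε⁻¹ • x))
          * pd a (pd b T0) x := by
    simp only [Finset.mul_sum]
    rw [sum_comm4]
    refine Finset.sum_congr rfl fun a _ => Finset.sum_congr rfl fun b _ => ?_
    rw [Finset.sum_mul]
    refine Finset.sum_congr rfl fun i _ => ?_
    rw [Finset.sum_mul]
    exact Finset.sum_congr rfl fun j _ => by ring
  -- the ε⁰–order terms reproduce the homogenized operator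
  have hQ : ∑ i, ∑ j, (k i j (ε⁻¹ • x) * pd i (pd j T0) x
      + pd i (k i j) (ε⁻¹ • x) * ∑ a, M a (ε⁻¹ • x) * pd j (pd a T0) x
      + pd i (k i j) (ε⁻¹ • x) * ∑ a, ∑ b, pd j (M2 a b) (ε⁻¹ • x) * pd a (pd b T0) x
      + k i j (ε⁻¹ • x) * ∑ a, pd j (M a) (ε⁻¹ • x) * pd i (pd a T0) x
      + k i j (ε⁻¹ • x) * ∑ a, pd i (M a) (ε⁻¹ • x) * pd j (pd a T0) x
      + k i j (ε⁻¹ • x) * ∑ a, ∑ b, pd i (pd j (M2 a b)) (ε⁻¹ • x) * pd a (pd b T0) x)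
      = - h x := by
    have esplit : ∑ i, ∑ j, (k i j (ε⁻¹ • x) * pd i (pd j T0) x
        + pd i (k i j) (ε⁻¹ • x) * ∑ a, M a (ε⁻¹ • x) * pd j (pd a T0) x
        + pd i (k i j) (ε⁻¹ • x) * ∑ a, ∑ b, pd j (M2 a b) (ε⁻¹ • x) * pd a (pd b T0) x
        + k i j (ε⁻¹ • x) * ∑ a, pd j (M a) (ε⁻¹ • x) * pd i (pd a T0) x
        + k i j (ε⁻¹ • x) * ∑ a, pd i (M a) (ε⁻¹ • x) * pd j (pd a T0) x
        + k i j (ε⁻¹ • x) * ∑ a, ∑ b, pd i (pd j (M2 a b)) (ε⁻¹ • x) * pd a (pd b T0) x)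
        = (∑ i, ∑ j, k i j (ε⁻¹ • x) * pd i (pd j T0) x)
          + (∑ i, ∑ j, pd i (k i j) (ε⁻¹ • x) * ∑ a, M a (ε⁻¹ • x) * pd j (pd a T0) x)
          + (∑ i, ∑ j, pd i (k i j) (ε⁻¹ • x) *
              ∑ a, ∑ b, pd j (M2 a b) (ε⁻¹ • x) * pd a (pd b T0) x)
          + (∑ i, ∑ j, k i j (ε⁻¹ • x) * ∑ a, pd j (M a) (ε⁻¹ • x) * pd i (pd a T0) x)
          + (∑ i, ∑ j, k i j (ε⁻¹ • x) * ∑ a, pd i (M a) (ε⁻¹ • x) * pd j (pd a T0) x)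
          + (∑ i, ∑ j, k i j (ε⁻¹ • x) *
              ∑ a, ∑ b, pd i (pd j (M2 a b)) (ε⁻¹ • x) * pd a (pd b T0) x) := by
      simp only [Finset.sum_add_distrib]
    rw [esplit, hL2, hL3, hL4, hL5, hL6, ← hT0E]
    have e2 : ∑ a, ∑ b, khat a b * pd a (pd b T0) x
        = (∑ a, ∑ b, k a b (ε⁻¹ • x) * pd a (pd b T0) x)
          + (∑ a, ∑ b, (∑ i, pd i (k i b) (ε⁻¹ • x) * M a (ε⁻¹ • x)) * pd a (pd b T0) x)
          + (∑ a, ∑ b, (∑ i, k i b (ε⁻¹ • x) * pd i (M a) (ε⁻¹ • x)) * pd a (pd b T0) x)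
          + (∑ a, ∑ b, (∑ j, k a j (ε⁻¹ • x) * pd j (M b) (ε⁻¹ • x)) * pd a (pd b T0) x)
          + (∑ a, ∑ b, (∑ i, ∑ j, pd i (k i j) (ε⁻¹ • x) * pd j (M2 a b) (ε⁻¹ • x))
              * pd a (pd b T0) x)
          + (∑ a, ∑ b, (∑ i, ∑ j, k i j (ε⁻¹ • x) * pd i (pd j (M2 a b)) (ε⁻¹ • x))
              * pd a (pd b T0) x) := by
      calc ∑ a, ∑ b, khat a b * pd a (pd b T0) x
          = ∑ a, ∑ b, (k a b (ε⁻¹ • x) * pd a (pd b T0) x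
            + (∑ i, pd i (k i b) (ε⁻¹ • x) * M a (ε⁻¹ • x)) * pd a (pd b T0) x
            + (∑ i, k i b (ε⁻¹ • x) * pd i (M a) (ε⁻¹ • x)) * pd a (pd b T0) x
            + (∑ j, k a j (ε⁻¹ • x) * pd j (M b) (ε⁻¹ • x)) * pd a (pd b T0) x
            + (∑ i, ∑ j, pd i (k i j) (ε⁻¹ • x) * pd j (M2 a b) (ε⁻¹ • x))
                * pd a (pd b T0) x
            + (∑ i, ∑ j, k i j (ε⁻¹ • x) * pd i (pd j (M2 a b)) (ε⁻¹ • x))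
                * pd a (pd b T0) x) := by
            refine Finset.sum_congr rfl fun a _ => Finset.sum_congr rfl fun b _ => ?_
            rw [hkhat a b]
            simp only [Finset.sum_add_distrib]
            ring
        _ = _ := by simp only [Finset.sum_add_distrib]
    rw [e2]
    ring
  -- regrouping the ε–order terms
  have hC : ∑ i, ∑ j, (pd i (k i j) (ε⁻¹ • x) *
          ∑ a, ∑ b, M2 a b (ε⁻¹ • x) * pd j (pd a (pd b T0)) x
        + k i j (ε⁻¹ • x) * ∑ a, M a (ε⁻¹ • x) * pd i (pd j (pd a T0)) x
        + k i j (ε⁻¹ • x) * ∑ a, ∑ b, pd j (M2 a b) (ε⁻¹ • x) * pd i (pd a (pd b T0)) x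
        + k i j (ε⁻¹ • x) * ∑ a, ∑ b, pd i (M2 a b) (ε⁻¹ • x) * pd j (pd a (pd b T0)) x)
      = (∑ i, ∑ j, (pd i (k i j) (ε⁻¹ • x) *
            ∑ a, ∑ b, M2 a b (ε⁻¹ • x) * pd j (pd a (pd b T0)) x
          + k i j (ε⁻¹ • x) * ∑ a, ∑ b, pd i (M2 a b) (ε⁻¹ • x) * pd j (pd a (pd b T0)) x))
        + (∑ i, ∑ j, k i j (ε⁻¹ • x) *
            ∑ a, ∑ b, pd j (M2 a b) (ε⁻¹ • x) * pd i (pd a (pd b T0)) x)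
        + (∑ i, ∑ j, k i j (ε⁻¹ • x) * ∑ a, M a (ε⁻¹ • x) * pd i (pd j (pd a T0)) x) := by
    simp only [Finset.sum_add_distrib]
    ring
  -- splitting the full expansion by powers of ε
  have split : ∑ i, ∑ j, (ε⁻¹ * (pd i (k i j) (ε⁻¹ • x) * pd j T0 x
            + pd i (k i j) (ε⁻¹ • x) * ∑ a, pd j (M a) (ε⁻¹ • x) * pd a T0 x
            + k i j (ε⁻¹ • x) * ∑ a, pd i (pd j (M a)) (ε⁻¹ • x) * pd a T0 x)
        + (k i j (ε⁻¹ • x) * pd i (pd j T0) x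
            + pd i (k i j) (ε⁻¹ • x) * ∑ a, M a (ε⁻¹ • x) * pd j (pd a T0) x
            + pd i (k i j) (ε⁻¹ • x) * ∑ a, ∑ b, pd j (M2 a b) (ε⁻¹ • x) * pd a (pd b T0) x
            + k i j (ε⁻¹ • x) * ∑ a, pd j (M a) (ε⁻¹ • x) * pd i (pd a T0) x
            + k i j (ε⁻¹ • x) * ∑ a, pd i (M a) (ε⁻¹ • x) * pd j (pd a T0) x
            + k i j (ε⁻¹ • x) * ∑ a, ∑ b, pd i (pd j (M2 a b)) (ε⁻¹ • x) * pd a (pd b T0) x)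
        + ε * (pd i (k i j) (ε⁻¹ • x) * ∑ a, ∑ b, M2 a b (ε⁻¹ • x) * pd j (pd a (pd b T0)) x
            + k i j (ε⁻¹ • x) * ∑ a, M a (ε⁻¹ • x) * pd i (pd j (pd a T0)) x
            + k i j (ε⁻¹ • x) * ∑ a, ∑ b, pd j (M2 a b) (ε⁻¹ • x) * pd i (pd a (pd b T0)) x
            + k i j (ε⁻¹ • x) * ∑ a, ∑ b, pd i (M2 a b) (ε⁻¹ • x) * pd j (pd a (pd b T0)) x)
        + ε ^ 2 * (k i j (ε⁻¹ • x) *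
            ∑ a, ∑ b, M2 a b (ε⁻¹ • x) * pd i (pd j (pd a (pd b T0))) x))
      = ε⁻¹ * (∑ i, ∑ j, (pd i (k i j) (ε⁻¹ • x) * pd j T0 x
            + pd i (k i j) (ε⁻¹ • x) * ∑ a, pd j (M a) (ε⁻¹ • x) * pd a T0 x
            + k i j (ε⁻¹ • x) * ∑ a, pd i (pd j (M a)) (ε⁻¹ • x) * pd a T0 x))
        + (∑ i, ∑ j, (k i j (ε⁻¹ • x) * pd i (pd j T0) x
            + pd i (k i j) (ε⁻¹ • x) * ∑ a, M a (ε⁻¹ • x) * pd j (pd a T0) x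
            + pd i (k i j) (ε⁻¹ • x) * ∑ a, ∑ b, pd j (M2 a b) (ε⁻¹ • x) * pd a (pd b T0) x
            + k i j (ε⁻¹ • x) * ∑ a, pd j (M a) (ε⁻¹ • x) * pd i (pd a T0) x
            + k i j (ε⁻¹ • x) * ∑ a, pd i (M a) (ε⁻¹ • x) * pd j (pd a T0) x
            + k i j (ε⁻¹ • x) * ∑ a, ∑ b, pd i (pd j (M2 a b)) (ε⁻¹ • x) * pd a (pd b T0) x))
        + ε * (∑ i, ∑ j, (pd i (k i j) (ε⁻¹ • x) *
              ∑ a, ∑ b, M2 a b (ε⁻¹ • x) * pd j (pd a (pd b T0)) x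
            + k i j (ε⁻¹ • x) * ∑ a, M a (ε⁻¹ • x) * pd i (pd j (pd a T0)) x
            + k i j (ε⁻¹ • x) * ∑ a, ∑ b, pd j (M2 a b) (ε⁻¹ • x) * pd i (pd a (pd b T0)) x
            + k i j (ε⁻¹ • x) * ∑ a, ∑ b, pd i (M2 a b) (ε⁻¹ • x) * pd j (pd a (pd b T0)) x))
        + ε ^ 2 * (∑ i, ∑ j, k i j (ε⁻¹ • x) *
            ∑ a, ∑ b, M2 a b (ε⁻¹ • x) * pd i (pd j (pd a (pd b T0))) x) := by
    simp only [Finset.sum_add_distrib, ← Finset.mul_sum]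
  -- final assembly
  rw [LHSred]
  simp only [Sexp]
  rw [split, hP0, hQ, hC, hR1, hR2, hR3, hR4]
  ring
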